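/- Let α be an irrational real number with 0 < α < 1/2, let k ≥ 1, and let m be a positive integer with ‖mα‖ ≥ ‖q_{k−1}α‖ + ‖q_kα‖. Then every factor of slope α that is an abelian power of period m and exponent e satisfies e < q_k. -/

import Mathlib

open scoped Classical

noncomputable section

namespace SturmianAbelian

/-- Complete quotients: `cq α t = α_t` for `t ≥ 1`; `cq α 0 = α` is a dummy value chosen so that
`cq α 1 = 1/(α - ⌊α⌋) = 1/α` when `0 < α < 1`. -/
noncomputable def cq (α : ℝ) : ℕ → ℝ
  | 0 => α
  | t + 1 => (cq α t - ⌊cq α t⌋)⁻¹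

/-- Partial quotients: `pq α t = a_t = ⌊α_t⌋` for `t ≥ 1`. -/
noncomputable def pq (α : ℝ) (t : ℕ) : ℕ := (⌊cq α t⌋).toNat

/-- Denominators of the convergents of `α`: `qd α k = q_k`, with
`q_0 = 1`, `q_1 = a_1`, `q_k = a_k q_{k-1} + q_{k-2}`. -/
noncomputable def qd (α : ℝ) : ℕ → ℕ
  | 0 => 1
  | 1 => pq α 1
  | (k + 2) => pq α (k + 2) * qd α (k + 1) + qd α k

/-- Distance from `x` to the nearest integer, `‖x‖`. -/
noncomputable def nint (x : ℝ) : ℝ := min (Int.fract x) (1 - Int.fract x)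

/-- The representative of `x` modulo 1 lying in `(0, 1]`. -/
noncomputable def fract' (x : ℝ) : ℝ := 1 - Int.fract (-x)

/-- The Sturmian word of slope `α` and intercept `ρ` in the lower convention:
`s n = 1` iff the fractional part of `ρ + nα` lies in `[1 - α, 1)`. -/
noncomputable def lowerWord (α ρ : ℝ) (n : ℕ) : Bool :=
  if 1 - α ≤ Int.fract (ρ + (n : ℝ) * α) then true else false

/-- The Sturmian word of slope `α` and intercept `ρ` in the upper convention:
`s n = 1` iff the representative of `ρ + nα` modulo 1 in `(0,1]` lies in `(1 - α, 1]`. -/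
noncomputable def upperWord (α ρ : ℝ) (n : ℕ) : Bool :=
  if 1 - α < fract' (ρ + (n : ℝ) * α) then true else false

/-- `s` is a Sturmian word of slope `α` (either convention, some intercept `ρ ∈ [0,1)`). -/
def IsSturmian (α : ℝ) (s : ℕ → Bool) : Prop :=
  ∃ ρ : ℝ, 0 ≤ ρ ∧ ρ < 1 ∧ (s = lowerWord α ρ ∨ s = upperWord α ρ)

/-- `w` is a (finite, contiguous) factor of the infinite word `s`. -/
def FactorOf (s : ℕ → Bool) (w : List Bool) : Prop :=
  ∃ i : ℕ, w = (List.range w.length).map fun j => s (i + j)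

/-- `w` is a factor of slope `α`. -/
def IsFactor (α : ℝ) (w : List Bool) : Prop :=
  ∃ s : ℕ → Bool, IsSturmian α s ∧ FactorOf s w

/-- Abelian equivalence: same length and the same number of occurrences of the letter 1. -/
def AbEq (u v : List Bool) : Prop :=
  u.length = v.length ∧ u.count true = v.count true

/-- `u` is an abelian power of period `m` and exponent `e`: a concatenation of `e ≥ 2` pairwise
abelian equivalent blocks, each of length `m ≥ 1`. -/
def IsAbelianPower (m e : ℕ) (u : List Bool) : Prop :=
  1 ≤ m ∧ 2 ≤ e ∧ u.length = e * m ∧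
  ∀ i < e, ∀ j < e, AbEq ((u.drop (i * m)).take m) ((u.drop (j * m)).take m)

/-- `w` has abelian period `m`: `w` is a contiguous factor of some abelian power of period `m`. -/
def HasAbPeriod (w : List Bool) (m : ℕ) : Prop :=
  ∃ e u, IsAbelianPower m e u ∧ w <:+: u

/-- `m` is the minimum abelian period of `w`. -/
def MinAbPeriod (w : List Bool) (m : ℕ) : Prop :=
  IsLeast {p : ℕ | HasAbPeriod w p} m

/-- `M(α) = {t·q_k : k ≥ 0, 1 ≤ t ≤ a_{k+1}}`. -/
def Mset (α : ℝ) : Set ℕ :=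
  {m | ∃ k t : ℕ, 1 ≤ t ∧ t ≤ pq α (k + 1) ∧ m = t * qd α k}

/-- The set of denominators of convergents and semiconvergents of `α`. -/
def Qsc (α : ℝ) : Set ℕ :=
  {m | (∃ k : ℕ, m = qd α k) ∨
    ∃ k l : ℕ, 1 ≤ k ∧ 1 ≤ l ∧ l < pq α (k + 1) ∧ m = l * qd α k + qd α (k - 1)}

/-- The singular factor of length `q_k`: the unique factor of slope `α` of length `q_k` that is not
abelian equivalent to any other factor of slope `α` of the same length. -/
def IsSingular (α : ℝ) (k : ℕ) (s : List Bool) : Prop :=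
  IsFactor α s ∧ s.length = qd α k ∧
  ∀ u : List Bool, IsFactor α u → u.length = qd α k → u ≠ s → ¬ AbEq u s

/-- `v` occurs in `u` at position `i`. -/
def OccursAt (v u : List Bool) (i : ℕ) : Prop :=
  i + v.length ≤ u.length ∧ (u.drop i).take v.length = v

/-- `u` is a complete first return to `v`: `v` is a prefix and a suffix of `u` and `v` has exactly
two occurrences in `u`. -/
def CompleteFirstReturn (v u : List Bool) : Prop :=
  v <+: u ∧ v <:+ u ∧ {i | OccursAt v u i}.ncard = 2

/-- `u` is a complete first return to `v` in the same phase. -/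
def CFRSamePhase (v u : List Bool) : Prop :=
  v <+: u ∧ v <:+ u ∧ u.length % v.length = 0 ∧
  2 ≤ {i | OccursAt v u i}.ncard ∧
  ∀ i : ℕ, OccursAt v u i → i % v.length = 0 → i = 0 ∨ i = u.length - v.length

/-! ### Auxiliary lemmas -/

lemma cq_irrational {α : ℝ} (hirr : Irrational α) : ∀ t, Irrational (cq α t)
  | 0 => hirr
  | t + 1 => by
      have h := cq_irrational hirr t
      have h2 : Irrational (cq α t - ⌊cq α t⌋) := Irrational.sub_intCast h _
      simpa [cq] using h2.inv

/-- The sequence `b t = |q_{t-1} α - p_{t-1}|`, with `b 0 = 1`, `b 1 = α`. -/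
noncomputable def bseq (α : ℝ) : ℕ → ℝ
  | 0 => 1
  | 1 => α
  | (t + 2) => bseq α t - (pq α (t + 1) : ℝ) * bseq α (t + 1)

lemma bseq_main {α : ℝ} (hirr : Irrational α) (h0 : 0 < α) (h1 : α < 1) :
    ∀ t, 0 < bseq α (t + 1) ∧ bseq α (t + 1) < bseq α t ∧
      cq α (t + 1) * bseq α (t + 1) = bseq α t := by
  intro t
  induction t with
  | zero =>
      have hfl : ⌊α⌋ = 0 := Int.floor_eq_zero_iff.mpr ⟨le_of_lt h0, h1⟩
      refine ⟨h0, by simpa [bseq] using h1, ?_⟩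
      show (α - (⌊α⌋ : ℤ) : ℝ)⁻¹ * α = 1
      rw [hfl]
      simp [inv_mul_cancel₀ (ne_of_gt h0)]
  | succ t ih =>
      obtain ⟨hb1, hb2, hcq⟩ := ih
      set x := cq α (t + 1) with hxdef
      have hxirr : Irrational x := cq_irrational hirr (t + 1)
      have hx1 : 1 < x := by
        have h' : 1 * bseq α (t + 1) < x * bseq α (t + 1) := by rw [hcq]; linarith
        exact lt_of_mul_lt_mul_right h' (le_of_lt hb1)
      have hflge : (1 : ℤ) ≤ ⌊x⌋ := Int.le_floor.mpr (by exact_mod_cast le_of_lt hx1)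
      have hpq : ((pq α (t + 1) : ℕ) : ℝ) = ((⌊x⌋ : ℤ) : ℝ) := by
        unfold pq
        rw [← hxdef]
        exact_mod_cast congrArg (fun z : ℤ => (z : ℝ)) (Int.toNat_of_nonneg (by omega))
      have hfr0 : 0 < Int.fract x := Int.fract_pos.mpr (fun hcon => hxirr.ne_int ⌊x⌋ hcon)
      have hfr1 : Int.fract x < 1 := Int.fract_lt_one x
      have hbnew : bseq α (t + 2) = Int.fract x * bseq α (t + 1) := by
        show bseq α t - (pq α (t + 1) : ℝ) * bseq α (t + 1) = Int.fract x * bseq α (t + 1)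
        rw [hpq, ← hcq, Int.fract]
        ring
      have hpos : 0 < bseq α (t + 2) := by rw [hbnew]; exact mul_pos hfr0 hb1
      refine ⟨hpos, ?_, ?_⟩
      · rw [hbnew]
        nlinarith
      · show (x - (⌊x⌋ : ℤ) : ℝ)⁻¹ * bseq α (t + 2) = bseq α (t + 1)
        rw [hbnew, Int.fract]
        rw [← mul_assoc, inv_mul_cancel₀ (by positivity), one_mul]
lemma bseq_pos {α : ℝ} (hirr : Irrational α) (h0 : 0 < α) (h1 : α < 1) :
    ∀ t, 0 < bseq α t
  | 0 => by norm_num [bseq]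
  | (t + 1) => (bseq_main hirr h0 h1 t).1

lemma bseq_le_alpha {α : ℝ} (hirr : Irrational α) (h0 : 0 < α) (h1 : α < 1) :
    ∀ t, bseq α (t + 1) ≤ α
  | 0 => le_of_eq rfl
  | (t + 1) => le_trans (le_of_lt (bseq_main hirr h0 h1 (t + 1)).2.1)
      (bseq_le_alpha hirr h0 h1 t)

lemma pq_ge_one {α : ℝ} (hirr : Irrational α) (h0 : 0 < α) (h1 : α < 1) (t : ℕ) :
    1 ≤ pq α (t + 1) := by
  obtain ⟨hb1, hb2, hcq⟩ := bseq_main hirr h0 h1 t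
  have hx1 : 1 < cq α (t + 1) := by
    have h' : 1 * bseq α (t + 1) < cq α (t + 1) * bseq α (t + 1) := by rw [hcq]; linarith
    exact lt_of_mul_lt_mul_right h' (le_of_lt hb1)
  have : (1 : ℤ) ≤ ⌊cq α (t + 1)⌋ := Int.le_floor.mpr (by exact_mod_cast le_of_lt hx1)
  unfold pq
  omega

lemma pq_one_ge_two {α : ℝ} (h0 : 0 < α) (h2 : α < 1 / 2) : 2 ≤ pq α 1 := by
  have h1 : α < 1 := by linarith
  have hfl : ⌊α⌋ = 0 := Int.floor_eq_zero_iff.mpr ⟨le_of_lt h0, h1⟩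
  have hcq : cq α 1 = α⁻¹ := by
    show (α - (⌊α⌋ : ℤ) : ℝ)⁻¹ = α⁻¹
    rw [hfl]; norm_num
  have h2' : (2 : ℝ) < α⁻¹ := by
    rw [show α⁻¹ = 1 / α from (one_div α).symm]
    rw [lt_div_iff₀ h0]; linarith
  have : (2 : ℤ) ≤ ⌊cq α 1⌋ := Int.le_floor.mpr (by rw [hcq]; exact_mod_cast le_of_lt h2')
  unfold pq
  omega

lemma qd_pos {α : ℝ} (hirr : Irrational α) (h0 : 0 < α) (h1 : α < 1) :
    ∀ k, 1 ≤ qd α k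
  | 0 => le_refl 1
  | 1 => pq_ge_one hirr h0 h1 0
  | (k + 2) => by
      have ha := pq_ge_one hirr h0 h1 (k + 1)
      have hq := qd_pos hirr h0 h1 (k + 1)
      have hmul : 1 * 1 ≤ pq α (k + 2) * qd α (k + 1) := Nat.mul_le_mul ha hq
      show 1 ≤ pq α (k + 2) * qd α (k + 1) + qd α k
      omega

lemma qd_lt_succ {α : ℝ} (hirr : Irrational α) (h0 : 0 < α) (h2 : α < 1 / 2) :
    ∀ k, qd α k < qd α (k + 1)
  | 0 => by
      have := pq_one_ge_two h0 h2
      show qd α 0 < qd α 1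
      show 1 < pq α 1
      omega
  | (k + 1) => by
      have h1 : α < 1 := by linarith
      have ha := pq_ge_one hirr h0 h1 (k + 1)
      have hq := qd_pos hirr h0 h1 (k + 1)
      have hq0 := qd_pos hirr h0 h1 k
      have hmul : 1 * qd α (k + 1) ≤ pq α (k + 2) * qd α (k + 1) :=
        Nat.mul_le_mul_right _ ha
      show qd α (k + 1) < pq α (k + 2) * qd α (k + 1) + qd α k
      omega

lemma qd_bseq {α : ℝ} (hirr : Irrational α) (h0 : 0 < α) (h1 : α < 1) :
    ∀ t, (qd α (t + 1) : ℝ) * bseq α (t + 1) + (qd α t : ℝ) * bseq α (t + 2) = 1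
  | 0 => by
      show (qd α 1 : ℝ) * bseq α 1 + (qd α 0 : ℝ) * (bseq α 0 - (pq α 1 : ℝ) * bseq α 1) = 1
      show (pq α 1 : ℝ) * α + (1 : ℕ) * ((1 : ℝ) - (pq α 1 : ℝ) * α) = 1
      push_cast
      ring
  | (t + 1) => by
      have ih := qd_bseq hirr h0 h1 t
      show ((pq α (t + 2) * qd α (t + 1) + qd α t : ℕ) : ℝ) * bseq α (t + 2)
          + (qd α (t + 1) : ℝ) * (bseq α (t + 1) - (pq α (t + 2) : ℝ) * bseq α (t + 2)) = 1
      push_cast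
      linear_combination ih
/-- Numerators of convergents. -/
noncomputable def pnum (α : ℝ) : ℕ → ℤ
  | 0 => 0
  | 1 => 1
  | (k + 2) => (pq α (k + 2) : ℤ) * pnum α (k + 1) + pnum α k

lemma qd_alpha_sub {α : ℝ} (hirr : Irrational α) (h0 : 0 < α) (h1 : α < 1) :
    ∀ k, ((qd α k : ℝ) * α - (pnum α k : ℝ) = (-1 : ℝ) ^ k * bseq α (k + 1)) ∧
      ((qd α (k + 1) : ℝ) * α - (pnum α (k + 1) : ℝ) = (-1 : ℝ) ^ (k + 1) * bseq α (k + 2))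
  | 0 => by
      constructor
      · show ((1 : ℕ) : ℝ) * α - ((0 : ℤ) : ℝ) = (-1 : ℝ) ^ 0 * bseq α 1
        norm_num
        rfl
      · show ((pq α 1 : ℕ) : ℝ) * α - ((1 : ℤ) : ℝ)
            = (-1 : ℝ) ^ 1 * (bseq α 0 - (pq α 1 : ℝ) * bseq α 1)
        show ((pq α 1 : ℕ) : ℝ) * α - ((1 : ℤ) : ℝ)
            = (-1 : ℝ) ^ 1 * ((1 : ℝ) - (pq α 1 : ℝ) * α)
        push_cast
        ring
  | (k + 1) => by
      obtain ⟨ih0, ih1⟩ := qd_alpha_sub hirr h0 h1 k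
      refine ⟨ih1, ?_⟩
      show ((pq α (k + 2) * qd α (k + 1) + qd α k : ℕ) : ℝ) * α
          - (((pq α (k + 2) : ℤ) * pnum α (k + 1) + pnum α k : ℤ) : ℝ)
          = (-1 : ℝ) ^ (k + 2) * (bseq α (k + 1) - (pq α (k + 2) : ℝ) * bseq α (k + 2))
      push_cast
      simp only [pow_succ]
      linear_combination (pq α (k + 2) : ℝ) * ih1 + ih0

lemma nint_le_half (x : ℝ) : nint x ≤ 1 / 2 := by
  unfold nint
  rcases le_total (Int.fract x) (1 / 2) with h | h
  · exact le_trans (min_le_left _ _) h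
  · exact le_trans (min_le_right _ _) (by linarith)

lemma nint_eq_abs (x : ℝ) (c : ℤ) (h : |x - c| ≤ 1 / 2) : nint x = |x - c| := by
  set r := x - (c : ℝ) with hr
  have hx : x = r + (c : ℝ) := by rw [hr]; ring
  have hf : Int.fract x = Int.fract r := by rw [hx, ← Int.fract_add_intCast r c]
  unfold nint
  rw [hf]
  obtain ⟨ha, hb⟩ := abs_le.mp h
  rcases le_or_gt 0 r with hpos | hneg
  · have hfr : Int.fract r = r := Int.fract_eq_self.mpr ⟨hpos, by linarith⟩
    rw [hfr, abs_of_nonneg hpos]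
    exact min_eq_left (by linarith)
  · have hfl : ⌊r⌋ = -1 := by
      rw [Int.floor_eq_iff]
      constructor
      · push_cast; linarith
      · push_cast; linarith
    have hfr : Int.fract r = r + 1 := by
      rw [Int.fract, hfl]; push_cast; ring
    rw [hfr, abs_of_neg hneg]
    have h' : min (r + 1) (1 - (r + 1)) = 1 - (r + 1) := min_eq_right (by linarith)
    rw [h']; ring

lemma nint_le_abs (x : ℝ) (c : ℤ) : nint x ≤ |x - c| := by
  rcases le_or_gt (|x - c|) (1 / 2) with h | h
  · exact le_of_eq (nint_eq_abs x c h)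
  · exact le_trans (nint_le_half x) (le_of_lt h)

lemma nint_qd {α : ℝ} (hirr : Irrational α) (h0 : 0 < α) (h2 : α < 1 / 2) (k : ℕ) :
    nint ((qd α k : ℝ) * α) = bseq α (k + 1) := by
  have h1 : α < 1 := by linarith
  have hs := (qd_alpha_sub hirr h0 h1 k).1
  have hbpos := bseq_pos hirr h0 h1 (k + 1)
  have habs : |(qd α k : ℝ) * α - (pnum α k : ℝ)| = bseq α (k + 1) := by
    rw [hs, abs_mul, abs_pow, abs_neg, abs_one, one_pow, one_mul, abs_of_pos hbpos]
  have hle : |(qd α k : ℝ) * α - (pnum α k : ℝ)| ≤ 1 / 2 := by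
    rw [habs]
    linarith [bseq_le_alpha hirr h0 h1 k]
  rw [nint_eq_abs _ (pnum α k) hle, habs]
lemma count_eq_sum (g : ℕ → Bool) : ∀ m : ℕ,
    ((((List.range m).map g).count true : ℕ) : ℤ)
      = ∑ t ∈ Finset.range m, (if g t = true then (1 : ℤ) else 0)
  | 0 => by simp
  | (n + 1) => by
      rw [List.range_succ, List.map_append, List.count_append, Finset.sum_range_succ,
        ← count_eq_sum g n]
      by_cases hgn : g n = true <;> simp [hgn]

lemma block_eq (s : ℕ → Bool) (i e m j : ℕ) (hj : j < e) :
    ((((List.range (e * m)).map fun t => s (i + t)).drop (j * m)).take m)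
      = (List.range m).map fun t => s (i + j * m + t) := by
  have hle : j * m + m ≤ e * m := by
    have h1 : (j + 1) * m ≤ e * m := Nat.mul_le_mul_right m (Nat.succ_le_of_lt hj)
    calc j * m + m = (j + 1) * m := by ring
    _ ≤ e * m := h1
  apply List.ext_getElem
  · simp only [List.length_take, List.length_drop, List.length_map, List.length_range]
    omega
  · intro n h1 h2
    simp only [List.getElem_take, List.getElem_drop, List.getElem_map, List.getElem_range]
    congr 1
    omega

lemma key_lemma (α : ℝ) (g : ℕ → ℝ) (F : ℕ → ℤ) (s : ℕ → Bool)
    (hg : ∀ n, g (n + 1) = g n + α)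
    (hF : ∀ n, (if s n = true then (1 : ℤ) else 0) = F (n + 1) - F n)
    (hbd : ∀ n n', (g n - F n) - (g n' - F n') < 1)
    (m e : ℕ) (u : List Bool) (hu : FactorOf s u) (hpow : IsAbelianPower m e u) :
    (e : ℝ) * nint ((m : ℝ) * α) < 1 := by
  obtain ⟨hm1, he2, hlen, hab⟩ := hpow
  obtain ⟨i, hiu⟩ := hu
  rw [hlen] at hiu
  have hgshift : ∀ q n : ℕ, g (n + q) = g n + q * α := by
    intro q
    induction q with
    | zero => intro n; simp
    | succ p ih =>
        intro n
        have : n + (p + 1) = (n + p) + 1 := by omega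
        rw [this, hg (n + p), ih n]
        push_cast
        ring
  have hblockcount : ∀ j, j < e →
      ((((u.drop (j * m)).take m).count true : ℕ) : ℤ)
        = F (i + j * m + m) - F (i + j * m) := by
    intro j hj
    rw [hiu, block_eq s i e m j hj, count_eq_sum]
    have hcg : ∀ t ∈ Finset.range m, (if s (i + j * m + t) = true then (1 : ℤ) else 0)
        = F (i + j * m + (t + 1)) - F (i + j * m + t) := by
      intro t _
      rw [show i + j * m + (t + 1) = (i + j * m + t) + 1 by omega]
      exact hF (i + j * m + t)
    rw [Finset.sum_congr rfl hcg, Finset.sum_range_sub (fun t => F (i + j * m + t))]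
    simp
  have h0e : 0 < e := by omega
  have hc : ∀ j, j < e → F (i + j * m + m) - F (i + j * m) = F (i + m) - F i := by
    intro j hj
    have hcount := (hab j hj 0 h0e).2
    have e1 := hblockcount j hj
    have e2 := hblockcount 0 h0e
    rw [hcount] at e1
    simp only [Nat.zero_mul, List.drop_zero, Nat.add_zero] at e1 e2
    omega
  set c : ℤ := F (i + m) - F i with hcdef
  have hstep : ∀ j, j ≤ e →
      g (i + j * m) - F (i + j * m) = (g i - F i) + j * ((m : ℝ) * α - c) := by
    intro j
    induction j with
    | zero => intro _; simp
    | succ p ih =>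
        intro hpe
        have hp : p < e := by omega
        have ihh := ih (by omega)
        have hidx : i + (p + 1) * m = i + p * m + m := by ring
        have hgm : g (i + p * m + m) = g (i + p * m) + m * α := hgshift m (i + p * m)
        have hFm : F (i + p * m + m) = F (i + p * m) + c := by
          have := hc p hp
          omega
        rw [hidx, hgm, hFm]
        push_cast
        linear_combination ihh
  have hfin := hstep e (le_refl e)
  have hb1 := hbd (i + e * m) i
  have hb2 := hbd i (i + e * m)
  have habs : |(e : ℝ) * ((m : ℝ) * α - c)| < 1 := by
    rw [abs_lt]
    constructor <;> [linarith [hfin, hb2]; linarith [hfin, hb1]]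
  have hnint : nint ((m : ℝ) * α) ≤ |(m : ℝ) * α - c| := nint_le_abs _ c
  calc (e : ℝ) * nint ((m : ℝ) * α) ≤ (e : ℝ) * |(m : ℝ) * α - (c : ℝ)| := by
        apply mul_le_mul_of_nonneg_left hnint (by positivity)
    _ = |(e : ℝ) * ((m : ℝ) * α - (c : ℝ))| := by
        rw [abs_mul, abs_of_nonneg (by positivity : (0 : ℝ) ≤ (e : ℝ))]
    _ < 1 := habs
lemma floor_step {α : ℝ} (h0 : 0 < α) (h1 : α < 1) (x : ℝ) :
    ⌊x + α⌋ - ⌊x⌋ = if 1 - α ≤ Int.fract x then 1 else 0 := by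
  have hx : x + α = ((⌊x⌋ : ℤ) : ℝ) + (Int.fract x + α) := by
    rw [Int.fract]; ring
  rw [hx, Int.floor_intCast_add]
  have hf0 := Int.fract_nonneg x
  have hf1 := Int.fract_lt_one x
  split
  · rename_i h
    have : ⌊Int.fract x + α⌋ = 1 := by
      rw [Int.floor_eq_iff]
      constructor <;> [push_cast; push_cast] <;> linarith
    omega
  · rename_i h
    push_neg at h
    have : ⌊Int.fract x + α⌋ = 0 := by
      rw [Int.floor_eq_iff]
      constructor <;> [push_cast; push_cast] <;> linarith
    omega

lemma floor_step' {α : ℝ} (h0 : 0 < α) (h1 : α < 1) (x : ℝ) :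
    ⌊x⌋ - ⌊x - α⌋ = if Int.fract x < α then 1 else 0 := by
  have hx : x - α = ((⌊x⌋ : ℤ) : ℝ) + (Int.fract x - α) := by
    rw [Int.fract]; ring
  rw [hx, Int.floor_intCast_add]
  have hf0 := Int.fract_nonneg x
  have hf1 := Int.fract_lt_one x
  split
  · rename_i h
    have : ⌊Int.fract x - α⌋ = -1 := by
      rw [Int.floor_eq_iff]
      constructor <;> [push_cast; push_cast] <;> linarith
    omega
  · rename_i h
    push_neg at h
    have : ⌊Int.fract x - α⌋ = 0 := by
      rw [Int.floor_eq_iff]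
      constructor <;> [push_cast; push_cast] <;> linarith
    omega
theorem relation_exponent_convergent
    (α : ℝ) (hirr : Irrational α) (h0 : 0 < α) (h2 : α < 1 / 2)
    (k : ℕ) (hk : 1 ≤ k) (m : ℕ) (hm : 0 < m)
    (h : nint ((qd α (k - 1) : ℝ) * α) + nint ((qd α k : ℝ) * α) ≤ nint ((m : ℝ) * α)) :
    ∀ e : ℕ, ∀ u : List Bool, IsFactor α u → IsAbelianPower m e u → e < qd α k := by
  intro e u hfac hpow
  have h1 : α < 1 := by linarith
  obtain ⟨s, ⟨ρ, hρ0, hρ1, hsw⟩, hfo⟩ := hfac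
  have hkey : (e : ℝ) * nint ((m : ℝ) * α) < 1 := by
    rcases hsw with rfl | rfl
    · refine key_lemma α (fun n => ρ + (n : ℝ) * α) (fun n => ⌊ρ + (n : ℝ) * α⌋)
        (lowerWord α ρ) (fun n => by push_cast; ring) (fun n => ?_) (fun n n' => ?_)
        m e u hfo hpow
      · have hidx : ρ + ((n + 1 : ℕ) : ℝ) * α = (ρ + (n : ℝ) * α) + α := by push_cast; ring
        show (if lowerWord α ρ n = true then (1 : ℤ) else 0)
            = ⌊ρ + ((n + 1 : ℕ) : ℝ) * α⌋ - ⌊ρ + (n : ℝ) * α⌋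
        rw [hidx, floor_step h0 h1 (ρ + (n : ℝ) * α)]
        by_cases hc : 1 - α ≤ Int.fract (ρ + (n : ℝ) * α) <;> simp [lowerWord, hc]
      · have ha := Int.fract_lt_one (ρ + (n : ℝ) * α)
        have hb := Int.fract_nonneg (ρ + (n' : ℝ) * α)
        simp only [Int.fract] at ha hb
        show (ρ + (n : ℝ) * α - (⌊ρ + (n : ℝ) * α⌋ : ℤ))
            - (ρ + (n' : ℝ) * α - (⌊ρ + (n' : ℝ) * α⌋ : ℤ)) < 1
        linarith
    · refine key_lemma α (fun n => ρ + (n : ℝ) * α) (fun n => -⌊-(ρ + (n : ℝ) * α)⌋)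
        (upperWord α ρ) (fun n => by push_cast; ring) (fun n => ?_) (fun n n' => ?_)
        m e u hfo hpow
      · have hidx : -(ρ + ((n + 1 : ℕ) : ℝ) * α) = -(ρ + (n : ℝ) * α) - α := by
          push_cast; ring
        have hfs := floor_step' h0 h1 (-(ρ + (n : ℝ) * α))
        show (if upperWord α ρ n = true then (1 : ℤ) else 0)
            = -⌊-(ρ + ((n + 1 : ℕ) : ℝ) * α)⌋ - -⌊-(ρ + (n : ℝ) * α)⌋
        rw [hidx]
        by_cases hc : Int.fract (-(ρ + (n : ℝ) * α)) < α
        · rw [if_pos hc] at hfs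
          have hw : upperWord α ρ n = true := by
            unfold upperWord fract'
            rw [if_pos (by linarith)]
          rw [if_pos hw]
          omega
        · rw [if_neg hc] at hfs
          have hw : upperWord α ρ n = false := by
            unfold upperWord fract'
            rw [if_neg (by push_neg at hc ⊢; linarith)]
          rw [hw]
          simp only [Bool.false_eq_true, if_false]
          omega
      · have ha := Int.fract_nonneg (-(ρ + (n : ℝ) * α))
        have hb := Int.fract_lt_one (-(ρ + (n' : ℝ) * α))
        simp only [Int.fract] at ha hb
        show (ρ + (n : ℝ) * α - ((-⌊-(ρ + (n : ℝ) * α)⌋ : ℤ) : ℝ))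
            - (ρ + (n' : ℝ) * α - ((-⌊-(ρ + (n' : ℝ) * α)⌋ : ℤ) : ℝ)) < 1
        push_cast
        linarith
  obtain ⟨k', rfl⟩ : ∃ k', k = k' + 1 := ⟨k - 1, by omega⟩
  have hk1 : (k' + 1) - 1 = k' := by omega
  rw [hk1, nint_qd hirr h0 h2 k', nint_qd hirr h0 h2 (k' + 1)] at h
  have hid := qd_bseq hirr h0 h1 k'
  have hqlt : qd α k' < qd α (k' + 1) := qd_lt_succ hirr h0 h2 k'
  have hb2pos : 0 < bseq α (k' + 2) := bseq_pos hirr h0 h1 (k' + 2)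
  have hb1pos : 0 < bseq α (k' + 1) := bseq_pos hirr h0 h1 (k' + 1)
  have hqr : (qd α k' : ℝ) + 1 ≤ (qd α (k' + 1) : ℝ) := by exact_mod_cast hqlt
  have hprod : 0 < ((qd α (k' + 1) : ℝ) - (qd α k' : ℝ)) * bseq α (k' + 2) :=
    mul_pos (by linarith) hb2pos
  have hgt : 1 < (qd α (k' + 1) : ℝ) * (bseq α (k' + 1) + bseq α (k' + 2)) := by
    nlinarith [hid, hprod]
  have hepos : (0 : ℝ) ≤ (e : ℝ) := Nat.cast_nonneg e
  have hmul := mul_le_mul_of_nonneg_left h hepos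
  have hlt : (e : ℝ) * (bseq α (k' + 1) + bseq α (k' + 2))
      < (qd α (k' + 1) : ℝ) * (bseq α (k' + 1) + bseq α (k' + 2)) := by
    linarith [hkey, hgt, hmul]
  have hfinal : (e : ℝ) < (qd α (k' + 1) : ℝ) :=
    lt_of_mul_lt_mul_right hlt (by linarith)
  exact_mod_cast hfinal

end SturmianAbelian
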